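/- For every n ≥ 3, the minimum number of edges of a connected graph on n vertices with independence number at most 2 is binom(⌈n/2⌉,2) + binom(⌊n/2⌋,2) + 1. -/

import Mathlib

open Finset SimpleGraph

/-- A graph on {1,…,n} has independence number at most 2 if every 3-element
vertex subset contains an edge. -/
def IndepAtMostTwo {n : ℕ} (G : SimpleGraph (Fin n)) : Prop :=
  ∀ s : Finset (Fin n), s.card = 3 → ∃ u ∈ s, ∃ v ∈ s, G.Adj u v

lemma two_mul_choose_two (a : ℕ) : 2 * a.choose 2 = a * (a - 1) := by
  induction a with
  | zero => rfl
  | succ s ih =>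
    rw [Nat.choose_succ_succ, Nat.choose_one_right, Nat.mul_add, ih, Nat.succ_sub_one]
    cases s with
    | zero => rfl
    | succ t => rw [Nat.succ_sub_one]; ring

lemma choose_two_add (k m : ℕ) : (k + m).choose 2 = k.choose 2 + m.choose 2 + k * m := by
  induction m with
  | zero => simp
  | succ t ih =>
    rw [← Nat.add_assoc, Nat.choose_succ_succ, Nat.choose_one_right, ih,
      Nat.choose_succ_succ, Nat.choose_one_right]
    ring

lemma card_filter_lt (n k : ℕ) (hk : k ≤ n) :
    #(univ.filter fun i : Fin n => (i : ℕ) < k) = k := by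
  conv_rhs => rw [← Finset.card_range k]
  refine Finset.card_bij' (fun i _ => (i : ℕ))
    (fun j hj => (⟨j, lt_of_lt_of_le (Finset.mem_range.1 hj) hk⟩ : Fin n)) ?_ ?_ ?_ ?_
  · intro a ha; simpa using (Finset.mem_filter.1 ha).2
  · intro b hb; simp [Finset.mem_range.1 hb]
  · intro a ha; simp
  · intro b hb; simp

lemma card_filter_not_lt (n k : ℕ) (hk : k ≤ n) :
    #(univ.filter fun i : Fin n => ¬ (i : ℕ) < k) = n - k := by
  have h := Finset.card_filter_add_card_filter_not
    (s := (univ : Finset (Fin n))) (p := fun i : Fin n => (i : ℕ) < k)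
  rw [card_filter_lt n k hk, Finset.card_univ, Fintype.card_fin] at h
  omega

lemma card_filter_odd (n : ℕ) :
    #(univ.filter fun i : Fin n => (i : ℕ) % 2 = 1) = n / 2 := by
  conv_rhs => rw [← Finset.card_range (n / 2)]
  refine Finset.card_bij' (fun i _ => (i : ℕ) / 2)
    (fun j hj => (⟨2 * j + 1, by have := Finset.mem_range.1 hj; omega⟩ : Fin n)) ?_ ?_ ?_ ?_
  · intro a ha
    have h := (Finset.mem_filter.1 ha).2
    have h2 : (a : ℕ) < n := a.2
    simp only [Finset.mem_range]; omega
  · intro b hb; simp only [Finset.mem_filter, Finset.mem_univ, true_and]; omega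
  · intro a ha
    have h := (Finset.mem_filter.1 ha).2
    apply Fin.ext; simp; omega
  · intro b hb; simp; omega

lemma card_filter_not_odd (n : ℕ) :
    #(univ.filter fun i : Fin n => ¬ (i : ℕ) % 2 = 1) = n - n / 2 := by
  have h := Finset.card_filter_add_card_filter_not
    (s := (univ : Finset (Fin n))) (p := fun i : Fin n => (i : ℕ) % 2 = 1)
  rw [card_filter_odd, Finset.card_univ, Fintype.card_fin] at h
  omega

lemma turan2_card (n : ℕ) :
    #(turanGraph n 2).edgeFinset = (n / 2) * ((n + 1) / 2) := by
  have hdeg : ∀ v : Fin n, (turanGraph n 2).degree v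
      = if (v : ℕ) % 2 = 1 then n - n / 2 else n / 2 := by
    intro v
    rw [degree, neighborFinset_eq_filter]
    by_cases hv : (v : ℕ) % 2 = 1
    · rw [if_pos hv, ← card_filter_not_odd n]
      congr 1
      apply Finset.filter_congr
      intro w _
      show ((v : ℕ) % 2 ≠ (w : ℕ) % 2) ↔ _
      constructor <;> intro h <;> omega
    · rw [if_neg hv, ← card_filter_odd n]
      congr 1
      apply Finset.filter_congr
      intro w _
      show ((v : ℕ) % 2 ≠ (w : ℕ) % 2) ↔ _
      constructor <;> intro h <;> omega
  have hsum := (turanGraph n 2).sum_degrees_eq_twice_card_edges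
  rw [Finset.sum_congr rfl (fun v _ => hdeg v), Finset.sum_ite, Finset.sum_const,
    Finset.sum_const, card_filter_odd, card_filter_not_odd, smul_eq_mul, smul_eq_mul] at hsum
  have : n / 2 * (n - n / 2) + (n - n / 2) * (n / 2) = 2 * (n / 2 * ((n + 1) / 2)) := by
    have h1 : n - n / 2 = (n + 1) / 2 := by omega
    rw [h1]; ring
  omega

/-- The union of two cliques on `Fin n`, split at `k`. -/
def cliques2 (n k : ℕ) : SimpleGraph (Fin n) where
  Adj u v := u ≠ v ∧ ((u : ℕ) < k ↔ (v : ℕ) < k)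
  symm := ⟨by intro u v h; exact ⟨h.1.symm, h.2.symm⟩⟩
  loopless := ⟨by intro v h; exact h.1 rfl⟩

instance (n k : ℕ) : DecidableRel (cliques2 n k).Adj := fun u v =>
  inferInstanceAs (Decidable (u ≠ v ∧ ((u : ℕ) < k ↔ (v : ℕ) < k)))

lemma cliques2_card (n k : ℕ) (hk : k ≤ n) :
    #(cliques2 n k).edgeFinset = k.choose 2 + (n - k).choose 2 := by
  have hdeg : ∀ v : Fin n, (cliques2 n k).degree v
      = if (v : ℕ) < k then k - 1 else (n - k) - 1 := by
    intro v
    rw [degree, neighborFinset_eq_filter]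
    by_cases hv : (v : ℕ) < k
    · rw [if_pos hv]
      have he : (univ.filter fun u : Fin n => (cliques2 n k).Adj v u)
          = (univ.filter fun u : Fin n => (u : ℕ) < k).erase v := by
        ext u
        simp only [Finset.mem_filter, Finset.mem_erase, Finset.mem_univ, true_and]
        show (v ≠ u ∧ ((v : ℕ) < k ↔ (u : ℕ) < k)) ↔ _
        constructor
        · rintro ⟨h1, h2⟩; exact ⟨h1.symm, h2.1 hv⟩
        · rintro ⟨h1, h2⟩; exact ⟨h1.symm, iff_of_true hv h2⟩
      rw [he, Finset.card_erase_of_mem (by simp [hv]), card_filter_lt n k hk]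
    · rw [if_neg hv]
      have he : (univ.filter fun u : Fin n => (cliques2 n k).Adj v u)
          = (univ.filter fun u : Fin n => ¬ (u : ℕ) < k).erase v := by
        ext u
        simp only [Finset.mem_filter, Finset.mem_erase, Finset.mem_univ, true_and]
        show (v ≠ u ∧ ((v : ℕ) < k ↔ (u : ℕ) < k)) ↔ _
        constructor
        · rintro ⟨h1, h2⟩; exact ⟨h1.symm, fun hu => hv (h2.2 hu)⟩
        · rintro ⟨h1, h2⟩; exact ⟨h1.symm, iff_of_false hv h2⟩
      rw [he, Finset.card_erase_of_mem
        (by simp only [Finset.mem_filter, Finset.mem_univ, true_and]; exact hv),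
        card_filter_not_lt n k hk]
  have hsum := (cliques2 n k).sum_degrees_eq_twice_card_edges
  rw [Finset.sum_congr rfl (fun v _ => hdeg v), Finset.sum_ite, Finset.sum_const,
    Finset.sum_const, card_filter_lt n k hk, card_filter_not_lt n k hk,
    smul_eq_mul, smul_eq_mul] at hsum
  have h1 : 2 * k.choose 2 = k * (k - 1) := two_mul_choose_two k
  have h2 : 2 * (n - k).choose 2 = (n - k) * ((n - k) - 1) := two_mul_choose_two (n - k)
  omega

/-- An isomorphism of graphs induces an isomorphism of complements. -/
def isoCompl {α β : Type*} {G : SimpleGraph α} {H : SimpleGraph β} (f : G ≃g H) : Gᶜ ≃g Hᶜ where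
  toEquiv := f.toEquiv
  map_rel_iff' := by
    intro a b
    simp only [compl_adj, ne_eq]
    rw [show H.Adj (f.toEquiv a) (f.toEquiv b) ↔ G.Adj a b from f.map_adj_iff,
      f.toEquiv.apply_eq_iff_eq]

lemma turan2_compl_walk_parity {n : ℕ} {u v : Fin n}
    (p : (turanGraph n 2)ᶜ.Walk u v) : (u : ℕ) % 2 = (v : ℕ) % 2 := by
  induction p with
  | nil => rfl
  | @cons a b c h p ih =>
    have h2 : (a : ℕ) % 2 = (b : ℕ) % 2 := not_ne_iff.1 h.2
    omega

lemma turan2_compl_not_connected {n : ℕ} (hn : 3 ≤ n) :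
    ¬ (turanGraph n 2)ᶜ.Connected := by
  intro h
  obtain ⟨p⟩ := h.preconnected ⟨0, by omega⟩ ⟨1, by omega⟩
  have := turan2_compl_walk_parity p
  simp at this

lemma ncard_edgeSet_eq {V : Type*} [Fintype V] (G : SimpleGraph V) [Fintype G.edgeSet] :
    G.edgeSet.ncard = #G.edgeFinset := by
  rw [Set.ncard_eq_toFinset_card']
  rfl

theorem stmt_11 (n : ℕ) (hn : 3 ≤ n) :
    IsLeast {m : ℕ | ∃ G : SimpleGraph (Fin n),
        G.Connected ∧ IndepAtMostTwo G ∧ G.edgeSet.ncard = m}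
      (((n + 1) / 2).choose 2 + (n / 2).choose 2 + 1) := by
  classical
  set k : ℕ := (n + 1) / 2 with hkdef
  have hk1 : 1 ≤ k := by omega
  have hkn : k < n := by omega
  have hkm : n - k = n / 2 := by omega
  constructor
  · -- membership : the two cliques joined by one edge
    have h0n : 0 < n := by omega
    refine ⟨cliques2 n k ⊔ edge (⟨0, h0n⟩ : Fin n) (⟨k, hkn⟩ : Fin n), ?_⟩
    set a : Fin n := ⟨0, h0n⟩
    set b : Fin n := ⟨k, hkn⟩
    have hak : (a : ℕ) < k := hk1
    have hbk : ¬ (b : ℕ) < k := lt_irrefl k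
    have hab : a ≠ b := Fin.ne_of_val_ne (show (0 : ℕ) ≠ k by omega)
    have hnadj : ¬ (cliques2 n k).Adj a b := by
      rintro ⟨-, h2⟩
      exact hbk (h2.1 hak)
    have hadj : ∀ u v : Fin n, u ≠ v → ((u : ℕ) < k ↔ (v : ℕ) < k) →
        (cliques2 n k ⊔ edge a b).Adj u v :=
      fun u v h1 h2 => (sup_adj _ _ _ _).2 (Or.inl ⟨h1, h2⟩)
    have habadj : (cliques2 n k ⊔ edge a b).Adj a b :=
      (sup_adj _ _ _ _).2 (Or.inr ((edge_adj a b a b).2 ⟨Or.inl ⟨rfl, rfl⟩, hab⟩))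
    refine ⟨?_, ?_, ?_⟩
    · -- connected
      have reach : ∀ v : Fin n, (cliques2 n k ⊔ edge a b).Reachable v a := by
        intro v
        by_cases hv : (v : ℕ) < k
        · by_cases hva : v = a
          · rw [hva]
          · exact (hadj v a hva (iff_of_true hv hak)).reachable
        · by_cases hvb : v = b
          · rw [hvb]; exact habadj.symm.reachable
          · exact ((hadj v b hvb (iff_of_false hv hbk)).reachable).trans
              habadj.symm.reachable
      exact (connected_iff _).2 ⟨fun u v => (reach u).trans (reach v).symm, ⟨a⟩⟩
    · -- independence number at most 2
      intro s hs
      obtain ⟨x, y, z, hxy, hxz, hyz, rfl⟩ := Finset.card_eq_three.1 hs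
      have key : ∃ u ∈ ({x, y, z} : Finset (Fin n)), ∃ v ∈ ({x, y, z} : Finset (Fin n)),
          u ≠ v ∧ ((u : ℕ) < k ↔ (v : ℕ) < k) := by
        by_cases hx : (x : ℕ) < k <;> by_cases hy : (y : ℕ) < k <;> by_cases hz : (z : ℕ) < k
        · exact ⟨x, by simp, y, by simp, hxy, iff_of_true hx hy⟩
        · exact ⟨x, by simp, y, by simp, hxy, iff_of_true hx hy⟩
        · exact ⟨x, by simp, z, by simp, hxz, iff_of_true hx hz⟩
        · exact ⟨y, by simp, z, by simp, hyz, iff_of_false hy hz⟩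
        · exact ⟨y, by simp, z, by simp, hyz, iff_of_true hy hz⟩
        · exact ⟨x, by simp, z, by simp, hxz, iff_of_false hx hz⟩
        · exact ⟨x, by simp, y, by simp, hxy, iff_of_false hx hy⟩
        · exact ⟨x, by simp, y, by simp, hxy, iff_of_false hx hy⟩
      obtain ⟨u, hu, v, hv, h1, h2⟩ := key
      exact ⟨u, hu, v, hv, hadj u v h1 h2⟩
    · -- edge count
      rw [ncard_edgeSet_eq, (cliques2 n k).card_edgeFinset_sup_edge hnadj hab,
        cliques2_card n k hkn.le, hkm]
  · -- lower bound
    rintro m ⟨G, hconn, hind, hcard⟩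
    have hcf : Gᶜ.CliqueFree 3 := by
      intro s hs
      obtain ⟨u, hu, v, hv, huv⟩ := hind s hs.2
      have hne : u ≠ v := huv.ne
      have := hs.1 (Finset.mem_coe.2 hu) (Finset.mem_coe.2 hv) hne
      exact this.2 huv
    have hm : m = #G.edgeFinset := hcard.symm.trans (ncard_edgeSet_eq G)
    have htotal : #G.edgeFinset + #Gᶜ.edgeFinset = n.choose 2 := by
      have hdisj : Disjoint G.edgeFinset Gᶜ.edgeFinset :=
        disjoint_edgeFinset.2 disjoint_compl_right
      have hsup : G ⊔ Gᶜ = ⊤ := sup_compl_eq_top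
      have h1 : (G ⊔ Gᶜ).edgeFinset = G.edgeFinset ∪ Gᶜ.edgeFinset := edgeFinset_sup
      have h2 : (G ⊔ Gᶜ).edgeFinset = (⊤ : SimpleGraph (Fin n)).edgeFinset := by
        apply Finset.coe_injective
        rw [coe_edgeFinset, coe_edgeFinset, hsup]
      rw [← Finset.card_union_of_disjoint hdisj, ← h1, h2,
        card_edgeFinset_top_eq_card_choose_two, Fintype.card_fin]
    have hle : #Gᶜ.edgeFinset ≤ (n / 2) * ((n + 1) / 2) := by
      have := (isTuranMaximal_turanGraph (n := n) (by norm_num : (0:ℕ) < 2)).2 (G' := Gᶜ) hcf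
      rwa [turan2_card n] at this
    have hkey : n.choose 2 = k.choose 2 + (n / 2).choose 2 + k * (n / 2) := by
      have hn2 : n = k + n / 2 := by omega
      conv_lhs => rw [hn2]
      exact choose_two_add k (n / 2)
    have hcomm : k * (n / 2) = (n / 2) * k := Nat.mul_comm _ _
    by_contra hlt
    push_neg at hlt
    have hGc : #Gᶜ.edgeFinset = (n / 2) * ((n + 1) / 2) := by
      have hrfl : (n / 2) * ((n + 1) / 2) = (n / 2) * k := rfl
      omega
    have hTM : Gᶜ.IsTuranMaximal 2 := by
      refine ⟨hcf, fun H _ hH => ?_⟩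
      have := (isTuranMaximal_turanGraph (n := n) (by norm_num : (0:ℕ) < 2)).2 (G' := H) hH
      rwa [turan2_card n, ← hGc] at this
    obtain ⟨f⟩ := hTM.nonempty_iso_turanGraph
    rw [Fintype.card_fin] at f
    have g := isoCompl f
    rw [compl_compl] at g
    exact turan2_compl_not_connected hn (g.connected_iff.1 hconn)
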